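/- In the exterior algebra Λ on θ_1,...,θ_m,ϑ_1,...,ϑ_m with Δ̌ = Σ_{r=1}^m ∂_{θ_r}∂_{ϑ_r}, the kernel of Δ̌ restricted to the bidegree-(ℓ₁,ℓ₂) component is zero whenever ℓ₁ + ℓ₂ ≥ m + 1: that is, if f ∈ Λ satisfies Δ̌(f) = 0, Σ_r θ_r∂_{θ_r}(f) = ℓ₁ f, Σ_r ϑ_r∂_{ϑ_r}(f) = ℓ₂ f, and ℓ₁ + ℓ₂ ≥ m + 1, then f = 0. -/

import Mathlib

noncomputable section

/-- Exterior algebra on θ_1,...,θ_m,ϑ_1,...,ϑ_m -/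
abbrev ExtA (m : ℕ) := ExteriorAlgebra ℂ ((Fin m ⊕ Fin m) → ℂ)

variable (m : ℕ)

def θv (r : Fin m) : ExtA m := ExteriorAlgebra.ι ℂ (Pi.single (Sum.inl r) 1)
def ϑv (r : Fin m) : ExtA m := ExteriorAlgebra.ι ℂ (Pi.single (Sum.inr r) 1)

/-- the odd superderivation ∂_{θ_r} (left contraction with the dual vector) -/
def dθ (r : Fin m) : Module.End ℂ (ExtA m) :=
  CliffordAlgebra.contractLeft (Q := (0 : QuadraticForm ℂ ((Fin m ⊕ Fin m) → ℂ)))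
    (LinearMap.proj (Sum.inl r))
/-- the odd superderivation ∂_{ϑ_r} -/
def dϑ (r : Fin m) : Module.End ℂ (ExtA m) :=
  CliffordAlgebra.contractLeft (Q := (0 : QuadraticForm ℂ ((Fin m ⊕ Fin m) → ℂ)))
    (LinearMap.proj (Sum.inr r))

/-- Δ̌ = Σ_r ∂_{θ_r}∂_{ϑ_r} -/
def Δc : Module.End ℂ (ExtA m) := ∑ r : Fin m, dθ m r ∘ₗ dϑ m r
/-- η̌ = multiplication by Σ_r θ_r ϑ_r -/
def ηc : Module.End ℂ (ExtA m) := LinearMap.mulLeft ℂ (∑ r : Fin m, θv m r * ϑv m r)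

def degθ : Module.End ℂ (ExtA m) := ∑ p : Fin m, LinearMap.mulLeft ℂ (θv m p) ∘ₗ dθ m p
def degϑ : Module.End ℂ (ExtA m) := ∑ p : Fin m, LinearMap.mulLeft ℂ (ϑv m p) ∘ₗ dϑ m p

lemma dθ_ι_mul (r : Fin m) (v : (Fin m ⊕ Fin m) → ℂ) (x : ExtA m) :
    dθ m r (ExteriorAlgebra.ι ℂ v * x) = v (Sum.inl r) • x - ExteriorAlgebra.ι ℂ v * dθ m r x :=
  CliffordAlgebra.contractLeft_ι_mul _ _ _

lemma dϑ_ι_mul (r : Fin m) (v : (Fin m ⊕ Fin m) → ℂ) (x : ExtA m) :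
    dϑ m r (ExteriorAlgebra.ι ℂ v * x) = v (Sum.inr r) • x - ExteriorAlgebra.ι ℂ v * dϑ m r x :=
  CliffordAlgebra.contractLeft_ι_mul _ _ _

lemma dθ_θ (r s : Fin m) (x : ExtA m) :
    dθ m r (θv m s * x) = (if s = r then x else 0) - θv m s * dθ m r x := by
  rw [θv, dθ_ι_mul, Pi.single_apply]
  simp [Sum.inl.injEq, ite_smul, eq_comm]

lemma dθ_ϑ (r s : Fin m) (x : ExtA m) :
    dθ m r (ϑv m s * x) = - (ϑv m s * dθ m r x) := by
  rw [ϑv, dθ_ι_mul, Pi.single_apply]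
  simp

lemma dϑ_θ (r s : Fin m) (x : ExtA m) :
    dϑ m r (θv m s * x) = - (θv m s * dϑ m r x) := by
  rw [θv, dϑ_ι_mul, Pi.single_apply]
  simp

lemma dϑ_ϑ (r s : Fin m) (x : ExtA m) :
    dϑ m r (ϑv m s * x) = (if s = r then x else 0) - ϑv m s * dϑ m r x := by
  rw [ϑv, dϑ_ι_mul, Pi.single_apply]
  simp [Sum.inr.injEq, ite_smul, eq_comm]

lemma θ_swap (p s : Fin m) (z : ExtA m) : θv m p * (θv m s * z) = -(θv m s * (θv m p * z)) := by
  have h : θv m p * θv m s = -(θv m s * θv m p) := by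
    rw [eq_neg_iff_add_eq_zero]; exact ExteriorAlgebra.ι_add_mul_swap _ _
  rw [← mul_assoc, h, neg_mul, mul_assoc]

lemma ϑθ_swap (p s : Fin m) (z : ExtA m) : ϑv m p * (θv m s * z) = -(θv m s * (ϑv m p * z)) := by
  have h : ϑv m p * θv m s = -(θv m s * ϑv m p) := by
    rw [eq_neg_iff_add_eq_zero, add_comm]; exact ExteriorAlgebra.ι_add_mul_swap _ _
  rw [← mul_assoc, h, neg_mul, mul_assoc]

lemma ϑ_swap (p s : Fin m) (z : ExtA m) : ϑv m p * (ϑv m s * z) = -(ϑv m s * (ϑv m p * z)) := by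
  have h : ϑv m p * ϑv m s = -(ϑv m s * ϑv m p) := by
    rw [eq_neg_iff_add_eq_zero]; exact ExteriorAlgebra.ι_add_mul_swap _ _
  rw [← mul_assoc, h, neg_mul, mul_assoc]

lemma θϑ_swap (p s : Fin m) (z : ExtA m) : θv m p * (ϑv m s * z) = -(ϑv m s * (θv m p * z)) := by
  have h : θv m p * ϑv m s = -(ϑv m s * θv m p) := by
    rw [eq_neg_iff_add_eq_zero, add_comm]; exact ExteriorAlgebra.ι_add_mul_swap _ _
  rw [← mul_assoc, h, neg_mul, mul_assoc]


lemma θθ_zero (p : Fin m) : θv m p * θv m p = 0 := ExteriorAlgebra.ι_sq_zero _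
lemma ϑϑ_zero (p : Fin m) : ϑv m p * ϑv m p = 0 := ExteriorAlgebra.ι_sq_zero _

lemma Δ_pair (r s : Fin m) (x : ExtA m) :
    dθ m r (dϑ m r (θv m s * (ϑv m s * x))) =
      (if s = r then θv m s * dθ m r x + ϑv m s * dϑ m r x - x else 0)
        + θv m s * (ϑv m s * dθ m r (dϑ m r x)) := by
  by_cases h : s = r
  · subst h
    simp only [dϑ_θ, dϑ_ϑ, dθ_θ, dθ_ϑ, if_pos rfl, map_neg, map_sub, map_add, mul_sub, mul_add,
      mul_neg, neg_neg, neg_sub, sub_neg_eq_add]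
    abel_nf; ac_rfl
  · simp only [dϑ_θ, dϑ_ϑ, dθ_θ, dθ_ϑ, if_neg h, map_neg, map_sub, map_add, mul_sub, mul_add,
      mul_neg, neg_neg, neg_sub, sub_neg_eq_add, sub_zero, mul_zero, zero_add, zero_sub]


lemma degθ_pair (p s : Fin m) (x : ExtA m) :
    θv m p * dθ m p (θv m s * (ϑv m s * x)) =
      (if s = p then θv m s * (ϑv m s * x) else 0) + θv m s * (ϑv m s * (θv m p * dθ m p x)) := by
  rw [dθ_θ, dθ_ϑ]
  by_cases h : s = p
  · subst h
    have e1 : ∀ z : ExtA m, θv m s * (θv m s * z) = 0 := fun z => by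
      rw [← mul_assoc, θθ_zero, zero_mul]
    have e2 : ∀ z : ExtA m, θv m s * (ϑv m s * (θv m s * z)) = 0 := fun z => by
      rw [ϑθ_swap, mul_neg, e1, neg_zero]
    rw [if_pos rfl, if_pos rfl]
    simp [e1, e2, mul_neg, mul_add, sub_neg_eq_add]
  · have g : ∀ z : ExtA m, θv m p * (θv m s * (ϑv m s * z)) = θv m s * (ϑv m s * (θv m p * z)) :=
      fun z => by rw [θ_swap, θϑ_swap, mul_neg, neg_neg]
    rw [if_neg h, if_neg h]
    simp [g, mul_neg, neg_neg]

lemma degϑ_pair (p s : Fin m) (x : ExtA m) :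
    ϑv m p * dϑ m p (θv m s * (ϑv m s * x)) =
      (if s = p then θv m s * (ϑv m s * x) else 0) + θv m s * (ϑv m s * (ϑv m p * dϑ m p x)) := by
  rw [dϑ_θ, dϑ_ϑ]
  by_cases h : s = p
  · subst h
    have f1 : ∀ z : ExtA m, ϑv m s * (ϑv m s * z) = 0 := fun z => by
      rw [← mul_assoc, ϑϑ_zero, zero_mul]
    have f2 : ∀ z : ExtA m, ϑv m s * (θv m s * z) = -(θv m s * (ϑv m s * z)) := fun z =>
      ϑθ_swap m s s z
    rw [if_pos rfl, if_pos rfl]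
    simp [f1, f2, mul_sub, mul_neg, neg_sub, sub_neg_eq_add]
  · have g : ∀ z : ExtA m, ϑv m p * (θv m s * (ϑv m s * z)) = θv m s * (ϑv m s * (ϑv m p * z)) :=
      fun z => by rw [ϑθ_swap, ϑ_swap, mul_neg, neg_neg]
    rw [if_neg h, if_neg h]
    simp [g, mul_neg, neg_neg]

def Ee : ExtA m := ∑ r : Fin m, θv m r * ϑv m r

lemma Ee_mul (x : ExtA m) : Ee m * x = ∑ s : Fin m, θv m s * (ϑv m s * x) := by
  rw [Ee, Finset.sum_mul]; simp_rw [mul_assoc]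

lemma Δc_apply (x : ExtA m) : Δc m x = ∑ r : Fin m, dθ m r (dϑ m r x) := by
  rw [Δc]; simp [LinearMap.sum_apply, LinearMap.comp_apply]

lemma degθ_apply (x : ExtA m) : degθ m x = ∑ p : Fin m, θv m p * dθ m p x := by
  rw [degθ]; simp [LinearMap.sum_apply, LinearMap.comp_apply, LinearMap.mulLeft_apply]

lemma degϑ_apply (x : ExtA m) : degϑ m x = ∑ p : Fin m, ϑv m p * dϑ m p x := by
  rw [degϑ]; simp [LinearMap.sum_apply, LinearMap.comp_apply, LinearMap.mulLeft_apply]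

lemma Δ_mulE (x : ExtA m) :
    Δc m (Ee m * x) = degθ m x + degϑ m x - (m : ℂ) • x + Ee m * Δc m x := by
  have h2 : (∑ r : Fin m, ∑ s : Fin m, θv m s * (ϑv m s * dθ m r (dϑ m r x)))
      = Ee m * Δc m x := by
    rw [Finset.sum_comm]
    simp_rw [← Finset.mul_sum]
    rw [Ee_mul, Δc_apply]
  rw [Δc_apply, Ee_mul]
  simp_rw [map_sum, Δ_pair]
  simp_rw [Finset.sum_add_distrib]
  rw [h2]
  simp_rw [Finset.sum_ite_eq' Finset.univ, Finset.mem_univ, if_true]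
  rw [Finset.sum_sub_distrib, Finset.sum_add_distrib, Finset.sum_const, Finset.card_univ,
    Fintype.card_fin, ← degθ_apply, ← degϑ_apply, ← Nat.cast_smul_eq_nsmul ℂ]

lemma degθ_mulE (x : ExtA m) : degθ m (Ee m * x) = Ee m * x + Ee m * degθ m x := by
  have h2 : (∑ p : Fin m, ∑ s : Fin m, θv m s * (ϑv m s * (θv m p * dθ m p x)))
      = Ee m * degθ m x := by
    rw [Finset.sum_comm]
    simp_rw [← Finset.mul_sum]
    rw [Ee_mul, degθ_apply]
  rw [degθ_apply, Ee_mul]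
  simp_rw [map_sum, Finset.mul_sum, degθ_pair]
  simp_rw [Finset.sum_add_distrib]
  rw [h2]
  simp_rw [Finset.sum_ite_eq' Finset.univ, Finset.mem_univ, if_true]

lemma degϑ_mulE (x : ExtA m) : degϑ m (Ee m * x) = Ee m * x + Ee m * degϑ m x := by
  have h2 : (∑ p : Fin m, ∑ s : Fin m, θv m s * (ϑv m s * (ϑv m p * dϑ m p x)))
      = Ee m * degϑ m x := by
    rw [Finset.sum_comm]
    simp_rw [← Finset.mul_sum]
    rw [Ee_mul, degϑ_apply]
  rw [degϑ_apply, Ee_mul]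
  simp_rw [map_sum, Finset.mul_sum, degϑ_pair]
  simp_rw [Finset.sum_add_distrib]
  rw [h2]
  simp_rw [Finset.sum_ite_eq' Finset.univ, Finset.mem_univ, if_true]

lemma mul_swap_ϑϑ (p s : Fin m) : ϑv m p * ϑv m s = -(ϑv m s * ϑv m p) := by
  rw [eq_neg_iff_add_eq_zero]; exact ExteriorAlgebra.ι_add_mul_swap _ _

lemma a_sq (r : Fin m) : (θv m r * ϑv m r) * (θv m r * ϑv m r) = 0 := by
  rw [mul_assoc, ϑθ_swap, mul_neg, ϑϑ_zero, mul_zero, mul_zero, neg_zero]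

lemma a_comm (p s : Fin m) : Commute (θv m p * ϑv m p) (θv m s * ϑv m s) := by
  show _ = _
  rw [mul_assoc, mul_assoc, ϑθ_swap, mul_neg, θ_swap, neg_neg, mul_swap_ϑϑ, mul_neg, mul_neg,
    θϑ_swap, mul_neg, neg_neg]

lemma sum_sq_zero_pow {R : Type*} [Ring R] {ι : Type*} (s : Finset ι) (a : ι → R)
    (h2 : ∀ i ∈ s, a i * a i = 0)
    (hc : ∀ i ∈ s, ∀ j ∈ s, Commute (a i) (a j)) :
    (∑ i ∈ s, a i) ^ (s.card + 1) = 0 := by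
  induction s using Finset.cons_induction with
  | empty => simp
  | cons i s hi ih =>
    rw [Finset.sum_cons, Finset.card_cons]
    have hcom : Commute (a i) (∑ j ∈ s, a j) :=
      Commute.sum_right _ _ _ fun j hj =>
        hc i (Finset.mem_cons_self i s) j (Finset.mem_cons_of_mem hj)
    have hS : (∑ j ∈ s, a j) ^ (s.card + 1) = 0 :=
      ih (fun j hj => h2 j (Finset.mem_cons_of_mem hj))
        (fun j hj k hk => hc j (Finset.mem_cons_of_mem hj) k (Finset.mem_cons_of_mem hk))
    rw [hcom.add_pow]
    refine Finset.sum_eq_zero fun k _ => ?_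
    match k with
    | 0 => rw [pow_zero, one_mul, Nat.sub_zero, pow_succ', ← pow_succ', show s.card + 1 + 1
        = (s.card + 1) + 1 from rfl, pow_succ, hS, zero_mul, zero_mul]
    | 1 => rw [pow_one, show s.card + 1 + 1 - 1 = s.card + 1 from rfl, hS, mul_zero, zero_mul]
    | (k + 2) => rw [show k + 2 = k + 1 + 1 from rfl, pow_succ, pow_succ,
        mul_assoc (a i ^ k) (a i) (a i), h2 i (Finset.mem_cons_self i s), mul_zero, zero_mul,
        zero_mul]

lemma Ee_pow : Ee m ^ (m + 1) = 0 := by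
  have h := sum_sq_zero_pow (Finset.univ : Finset (Fin m)) (fun r => θv m r * ϑv m r)
    (fun i _ => a_sq m i) (fun i _ j _ => a_comm m i j)
  rwa [Finset.card_univ, Fintype.card_fin] at h

/-- No nonzero Δ̌-harmonic elements in bidegree (ℓ₁,ℓ₂) when ℓ₁+ℓ₂ ≥ m+1. -/
theorem no_harmonic_high_degree (f : ExtA m) (ℓ₁ ℓ₂ : ℕ)
    (hf : Δc m f = 0) (h₁ : degθ m f = (ℓ₁ : ℂ) • f) (h₂ : degϑ m f = (ℓ₂ : ℂ) • f)
    (hdeg : m + 1 ≤ ℓ₁ + ℓ₂) : f = 0 := by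
  set c : ℕ → ℕ := fun k => ∑ j ∈ Finset.range k, (ℓ₁ + ℓ₂ + 2 * j - m) with hc
  have hterm : ∀ j : ℕ, ((ℓ₁ + ℓ₂ + 2 * j - m : ℕ) : ℂ)
      = (ℓ₁ : ℂ) + (ℓ₂ : ℂ) + 2 * (j : ℂ) - (m : ℂ) := by
    intro j
    have hm : m ≤ ℓ₁ + ℓ₂ + 2 * j := by omega
    push_cast [Nat.cast_sub hm]
    ring
  have key : ∀ k : ℕ,
      degθ m (Ee m ^ k * f) = ((ℓ₁ + k : ℕ) : ℂ) • (Ee m ^ k * f) ∧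
      degϑ m (Ee m ^ k * f) = ((ℓ₂ + k : ℕ) : ℂ) • (Ee m ^ k * f) ∧
      Δc m (Ee m ^ k * f) = ((c k : ℕ) : ℂ) • (Ee m ^ (k - 1) * f) := by
    intro k
    induction k with
    | zero =>
      refine ⟨?_, ?_, ?_⟩ <;> simp [h₁, h₂, hf, hc]
    | succ k ih =>
      obtain ⟨i1, i2, i3⟩ := ih
      have hgs : Ee m ^ (k + 1) * f = Ee m * (Ee m ^ k * f) := by
        rw [pow_succ', mul_assoc]
      refine ⟨?_, ?_, ?_⟩
      · rw [hgs, degθ_mulE, i1, mul_smul_comm, ← hgs]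
        push_cast
        module
      · rw [hgs, degϑ_mulE, i2, mul_smul_comm, ← hgs]
        push_cast
        module
      · rw [hgs, Δ_mulE, i1, i2, i3, mul_smul_comm]
        have hcs : ((c (k + 1) : ℕ) : ℂ) = (c k : ℂ) + ((ℓ₁ : ℂ) + ℓ₂ + 2 * k - m) := by
          rw [hc]
          simp only []
          rw [Finset.sum_range_succ, Nat.cast_add, hterm k]
        cases k with
        | zero =>
          simp only [pow_zero, one_mul, Nat.sub_self, Nat.zero_sub] at *
          rw [hcs]
          simp only [hc, Finset.sum_range_zero, Nat.cast_zero, zero_smul, add_zero, mul_zero]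
          push_cast
          module
        | succ n =>
          have he : Ee m * (Ee m ^ (n + 1 - 1) * f) = Ee m ^ (n + 1) * f := by
            rw [Nat.add_sub_cancel, pow_succ', mul_assoc]
          rw [he, Nat.add_sub_cancel, hcs]
          push_cast
          module
  have hdown : ∀ k : ℕ, Ee m ^ (k + 1) * f = 0 → Ee m ^ k * f = 0 := by
    intro k hk
    have h3 := (key (k + 1)).2.2
    rw [hk, map_zero, Nat.add_sub_cancel] at h3
    have hcpos : 0 < c (k + 1) := by
      rw [hc]
      refine Finset.sum_pos (fun j _ => by omega) ?_
      exact Finset.nonempty_range_add_one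
    have hne : ((c (k + 1) : ℕ) : ℂ) ≠ 0 := Nat.cast_ne_zero.mpr hcpos.ne'
    have := (smul_eq_zero.mp h3.symm).resolve_left hne
    exact this
  have hzero : ∀ j : ℕ, Ee m ^ (m + 1 - j) * f = 0 := by
    intro j
    induction j with
    | zero => rw [Nat.sub_zero, Ee_pow, zero_mul]
    | succ j ih =>
      rcases le_or_gt (j + 1) (m + 1) with h | h
      · have he : m + 1 - j = (m + 1 - (j + 1)) + 1 := by omega
        exact hdown _ (he ▸ ih)
      · have he : m + 1 - (j + 1) = m + 1 - j := by omega
        rw [he]; exact ih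
  have h0 := hzero (m + 1)
  rwa [Nat.sub_self, pow_zero, one_mul] at h0
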